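/- For a compact set a ⊆ ℝ² with vol(a) > 0 fixed, and fixed ε > 0, the function (θ, β) ↦ P^ε_{(θ,β)}(a) := vol(O^ε(F_{(θ,β)}(a)) \ F_{(θ,β)}(a)) / vol(a) is continuous on [−π/2, π/2] × [1, ∞). -/

import Mathlib

open Real MeasureTheory Metric Set
open scoped ENNReal Topology
open Filter

noncomputable def Fmap (θ β : ℝ) (x : EuclideanSpace ℝ (Fin 2)) : EuclideanSpace ℝ (Fin 2) :=
  WithLp.toLp 2 ![(β * cos θ ^ 2 + (1/β) * sin θ ^ 2) * x 0 + ((β - 1/β) * sin θ * cos θ) * x 1,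
    ((β - 1/β) * sin θ * cos θ) * x 0 + (β * sin θ ^ 2 + (1/β) * cos θ ^ 2) * x 1]

noncomputable def Pfun (ε θ β : ℝ) (a : Set (EuclideanSpace ℝ (Fin 2))) : ℝ :=
  (volume (cthickening ε (Fmap θ β '' a) \ (Fmap θ β '' a))).toReal / (volume a).toReal

/-! ### Auxiliary definitions and lemmas -/

local notation "E2" => EuclideanSpace ℝ (Fin 2)

/-- The level set of the distance function to a compact set is Lebesgue-null. -/
lemma levelset_null (K : Set E2) (hK : IsCompact K) (hne : K.Nonempty)
    {ε : ℝ} (hε : 0 < ε) : volume {x : E2 | infDist x K = ε} = 0 := by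
  set S : Set E2 := {x | infDist x K = ε} with hSdef
  have hSmeas : MeasurableSet S :=
    (isClosed_eq (continuous_infDist_pt K) continuous_const).measurableSet
  by_contra h
  set C : ℝ≥0∞ := volume (ball (0 : E2) 1) with hC
  have hCpos : 0 < C := measure_ball_pos _ _ one_pos
  have hCtop : C ≠ ⊤ := measure_ball_lt_top.ne
  -- density point
  have hne' : (volume.restrict S) ≠ 0 := by
    intro h0
    apply h
    have := congrArg (fun μ : Measure E2 => μ Set.univ) h0
    simpa [Measure.restrict_apply_univ] using this
  haveI : (ae (volume.restrict S)).NeBot := ae_neBot.mpr hne'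
  obtain ⟨x, hx, hxS⟩ := ((Besicovitch.ae_tendsto_measure_inter_div (volume : Measure E2) S).and
    (ae_restrict_mem hSmeas)).exists
  -- the density estimate
  have key : ∀ r : ℝ, 0 < r → r ≤ 2 * ε →
      volume (S ∩ closedBall x r) / volume (closedBall x r) ≤ ENNReal.ofReal (3/4) := by
    intro r hr hr2
    obtain ⟨y, hyK, hxy⟩ := hK.exists_infDist_eq_dist hne x
    have hdxy : dist x y = ε := by rw [← hxy]; exact hxS
    set t : ℝ := r / (2 * ε) with ht
    have ht0 : 0 < t := by positivity
    have ht1 : t ≤ 1 := by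
      rw [ht, div_le_one (by positivity)]; exact hr2
    have htε : t * ε = r / 2 := by rw [ht]; field_simp
    set z : E2 := x + t • (y - x) with hz
    have hzx : dist z x = t * ε := by
      rw [dist_eq_norm, hz]
      simp only [add_sub_cancel_left]
      rw [norm_smul, Real.norm_eq_abs, abs_of_pos ht0]
      rw [← dist_eq_norm, dist_comm, hdxy]
    have hzy : dist z y = (1 - t) * ε := by
      rw [dist_eq_norm, hz]
      have : x + t • (y - x) - y = (1 - t) • (x - y) := by
        module
      rw [this, norm_smul, Real.norm_eq_abs, abs_of_nonneg (by linarith), ← dist_eq_norm, hdxy]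
    have hsub : ball z (r/2) ⊆ closedBall x r := by
      intro w hw
      rw [mem_ball] at hw
      rw [mem_closedBall]
      calc dist w x ≤ dist w z + dist z x := dist_triangle _ _ _
        _ ≤ r/2 + t * ε := by exact add_le_add hw.le hzx.le
        _ = r := by rw [htε]; ring
    have hdisj : S ∩ ball z (r/2) = ∅ := by
      rw [eq_empty_iff_forall_notMem]
      rintro w ⟨hwS, hwb⟩
      rw [mem_ball] at hwb
      have : infDist w K < ε := by
        calc infDist w K ≤ dist w y := infDist_le_dist_of_mem hyK
          _ ≤ dist w z + dist z y := dist_triangle _ _ _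
          _ < r/2 + (1 - t) * ε := by exact add_lt_add_of_lt_of_le hwb hzy.le
          _ = ε := by rw [← htε]; ring
      exact this.ne hwS
    have hinc : S ∩ closedBall x r ⊆ closedBall x r \ ball z (r/2) := by
      intro w ⟨hwS, hwB⟩
      refine ⟨hwB, fun hwb => ?_⟩
      rw [eq_empty_iff_forall_notMem] at hdisj
      exact hdisj w ⟨hwS, hwb⟩
    have hb : volume (ball z (r/2)) = ENNReal.ofReal ((r/2)^2) * C := by
      rw [Measure.addHaar_ball _ _ (by positivity : (0:ℝ) ≤ r/2)]
      congr 2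
      simp [finrank_euclideanSpace_fin]
    have hB : volume (closedBall x r) = ENNReal.ofReal (r^2) * C := by
      rw [Measure.addHaar_closedBall _ _ hr.le]
      congr 2
      simp [finrank_euclideanSpace_fin]
    have hmeas : volume (S ∩ closedBall x r) ≤ ENNReal.ofReal (3/4 * r^2) * C := by
      calc volume (S ∩ closedBall x r) ≤ volume (closedBall x r \ ball z (r/2)) :=
            measure_mono hinc
        _ = volume (closedBall x r) - volume (ball z (r/2)) := by
            rw [measure_diff hsub measurableSet_ball.nullMeasurableSet measure_ball_lt_top.ne]
        _ = ENNReal.ofReal (r^2) * C - ENNReal.ofReal ((r/2)^2) * C := by rw [hb, hB]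
        _ = (ENNReal.ofReal (r^2) - ENNReal.ofReal ((r/2)^2)) * C := by
            rw [ENNReal.sub_mul (fun _ _ => hCtop)]
        _ = ENNReal.ofReal (3/4 * r^2) * C := by
            rw [← ENNReal.ofReal_sub _ (by positivity)]
            congr 1; ring
    calc volume (S ∩ closedBall x r) / volume (closedBall x r)
        ≤ (ENNReal.ofReal (3/4 * r^2) * C) / (ENNReal.ofReal (r^2) * C) := by
          rw [hB]; exact ENNReal.div_le_div_right hmeas _
      _ = ENNReal.ofReal (3/4 * r^2) / ENNReal.ofReal (r^2) := by
          rw [ENNReal.mul_div_mul_right _ _ hCpos.ne' hCtop]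
      _ = ENNReal.ofReal ((3/4 * r^2) / r^2) := by
          rw [ENNReal.ofReal_div_of_pos (by positivity)]
      _ = ENNReal.ofReal (3/4) := by
          congr 1; field_simp
  -- contradiction
  have h34 : (ENNReal.ofReal (3/4)) < 1 := by
    rw [ENNReal.ofReal_lt_one]; norm_num
  have hev : ∀ᶠ r in 𝓝[>] (0:ℝ),
      ENNReal.ofReal (3/4) < volume (S ∩ closedBall x r) / volume (closedBall x r) :=
    hx.eventually (eventually_gt_nhds h34)
  have hev2 : ∀ᶠ r in 𝓝[>] (0:ℝ), r ∈ Ioc (0:ℝ) (2*ε) :=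
    Ioc_mem_nhdsGT_of_mem ⟨le_refl 0, by positivity⟩
  obtain ⟨r, hr1, hr2⟩ := (hev.and hev2).exists
  exact absurd (key r hr2.1 hr2.2) (not_le.mpr hr1)

lemma mem_cthick_iff {K : Set E2} (hne : K.Nonempty) {δ : ℝ} (hδ : 0 ≤ δ) {x : E2} :
    x ∈ cthickening δ K ↔ infDist x K ≤ δ := by
  rw [mem_cthickening_iff]
  unfold infDist
  rw [ENNReal.le_ofReal_iff_toReal_le (Metric.infEdist_ne_top hne) hδ]

/-- Modulus of continuity for the measure of cthickenings. -/
lemma cthick_modulus (K : Set E2) (hK : IsCompact K) (hne : K.Nonempty)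
    {ε : ℝ} (hε : 0 < ε) {η : ℝ} (hη : 0 < η) :
    ∃ δ : ℝ, 0 < δ ∧ δ < ε ∧
      (volume (cthickening (ε + δ) K)).toReal ≤ (volume (cthickening ε K)).toReal + η ∧
      (volume (cthickening ε K)).toReal - η ≤ (volume (cthickening (ε - δ) K)).toReal := by
  have hfin : ∀ r : ℝ, volume (cthickening r K) ≠ ⊤ := fun r =>
    (hK.cthickening).measure_lt_top.ne
  -- right continuity
  have hRseq : Tendsto (fun n : ℕ => volume (cthickening (ε + 1/(n+1)) K)) atTop
      (𝓝 (volume (cthickening ε K))) := by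
    have hI : ⋂ n : ℕ, cthickening (ε + 1/(n+1)) K = cthickening ε K := by
      apply Subset.antisymm
      · intro x hx
        rw [mem_cthick_iff hne hε.le]
        rw [mem_iInter] at hx
        have h2 : ∀ n : ℕ, infDist x K ≤ ε + 1/(n+1) := fun n =>
          (mem_cthick_iff hne (le_add_of_le_of_nonneg hε.le (by positivity))).mp (hx n)
        by_contra hc
        push_neg at hc
        obtain ⟨n, hn⟩ := exists_nat_one_div_lt (sub_pos.mpr hc)
        exact absurd (h2 n) (by push_neg; linarith)
      · exact subset_iInter fun n =>
          cthickening_mono (le_add_of_le_of_nonneg le_rfl (by positivity)) K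
    rw [← hI]
    exact tendsto_measure_iInter_atTop
      (fun n => isClosed_cthickening.measurableSet.nullMeasurableSet)
      (fun m n hmn => cthickening_mono (by
        have hc : (m:ℝ) ≤ n := Nat.cast_le.mpr hmn
        have : (1:ℝ)/(n+1) ≤ 1/(m+1) := by
          apply one_div_le_one_div_of_le (by positivity); linarith
        linarith) K)
      ⟨0, hfin _⟩
  -- left continuity
  have hL : Tendsto (fun n : ℕ => volume (cthickening (ε - 1/(n+1)) K)) atTop
      (𝓝 (volume (cthickening ε K))) := by
    have hU : ⋃ n : ℕ, cthickening (ε - 1/(n+1)) K = thickening ε K := by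
      apply Subset.antisymm
      · refine iUnion_subset fun n => cthickening_subset_thickening' hε (by
          have : (0:ℝ) < 1/(n+1) := by positivity
          linarith) K
      · intro x hx
        rw [mem_thickening_iff_infDist_lt hne] at hx
        obtain ⟨n, hn⟩ := exists_nat_one_div_lt (sub_pos.mpr hx)
        refine mem_iUnion.mpr ⟨n, ?_⟩
        rw [mem_cthick_iff hne (by linarith [infDist_nonneg (s := K) (x := x)])]
        linarith
    have hthick : volume (thickening ε K) = volume (cthickening ε K) := by
      apply le_antisymm (measure_mono (thickening_subset_cthickening ε K))
      have hsplit : cthickening ε K ⊆ thickening ε K ∪ {x : E2 | infDist x K = ε} := by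
        intro x hx
        rcases lt_or_eq_of_le ((mem_cthick_iff hne hε.le).mp hx) with h | h
        · exact Or.inl ((mem_thickening_iff_infDist_lt hne).mpr h)
        · exact Or.inr h
      calc volume (cthickening ε K) ≤ volume (thickening ε K ∪ {x : E2 | infDist x K = ε}) :=
            measure_mono hsplit
        _ ≤ volume (thickening ε K) + volume {x : E2 | infDist x K = ε} := measure_union_le _ _
        _ = volume (thickening ε K) := by rw [levelset_null K hK hne hε, add_zero]
    rw [← hthick, ← hU]
    exact tendsto_measure_iUnion_atTop (fun m n hmn => cthickening_mono (by
      have hc : (m:ℝ) ≤ n := Nat.cast_le.mpr hmn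
      have : (1:ℝ)/(n+1) ≤ 1/(m+1) := by
        apply one_div_le_one_div_of_le (by positivity); linarith
      linarith) K)
  -- convert to real and pick n
  set M : ℝ := (volume (cthickening ε K)).toReal with hM
  have hR' : Tendsto (fun n : ℕ => (volume (cthickening (ε + 1/(n+1)) K)).toReal) atTop (𝓝 M) :=
    (ENNReal.tendsto_toReal (hfin ε)).comp hRseq
  have hL' : Tendsto (fun n : ℕ => (volume (cthickening (ε - 1/(n+1)) K)).toReal) atTop (𝓝 M) :=
    (ENNReal.tendsto_toReal (hfin ε)).comp hL
  have hsmall : Tendsto (fun n : ℕ => 1/((n:ℝ)+1)) atTop (𝓝 0) :=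
    tendsto_one_div_add_atTop_nhds_zero_nat
  have hIoo : Ioo (M - η) (M + η) ∈ 𝓝 M := Ioo_mem_nhds (by linarith) (by linarith)
  obtain ⟨n, h1, h2, h3⟩ := ((hR'.eventually hIoo).and ((hL'.eventually hIoo).and
    (hsmall.eventually (Iio_mem_nhds hε)))).exists
  exact ⟨1/((n:ℝ)+1), by positivity, h3, h1.2.le, h2.1.le⟩

noncomputable def Fmat (θ β : ℝ) : Matrix (Fin 2) (Fin 2) ℝ :=
  !![β * cos θ ^ 2 + (1/β) * sin θ ^ 2, (β - 1/β) * sin θ * cos θ;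
     (β - 1/β) * sin θ * cos θ, β * sin θ ^ 2 + (1/β) * cos θ ^ 2]

lemma Fmap_eq_toEuclideanLin (θ β : ℝ) :
    Fmap θ β = ⇑(Matrix.toEuclideanLin (Fmat θ β)) := by
  funext x
  have : Matrix.toEuclideanLin (Fmat θ β) x =
      (WithLp.equiv 2 (Fin 2 → ℝ)).symm
        (Matrix.mulVec (Fmat θ β) ((WithLp.equiv 2 (Fin 2 → ℝ)) x)) := rfl
  rw [this]
  ext i
  fin_cases i <;>
    simp [Fmap, Fmat, Matrix.mulVec, dotProduct, Fin.sum_univ_two,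
      WithLp.equiv_symm_apply, WithLp.equiv_apply]

lemma Fmat_det (θ : ℝ) {β : ℝ} (hβ : β ≠ 0) : (Fmat θ β).det = 1 := by
  rw [Fmat, Matrix.det_fin_two_of]
  have h := sin_sq_add_cos_sq θ
  field_simp
  linear_combination (β * β * (sin θ^2 + cos θ^2 + 1)) * h

lemma Fmap_continuous (θ β : ℝ) : Continuous (Fmap θ β) := by
  rw [Fmap_eq_toEuclideanLin]
  exact (Matrix.toEuclideanLin (Fmat θ β)).continuous_of_finiteDimensional

lemma Fmap_volume_image (θ : ℝ) {β : ℝ} (hβ : β ≠ 0) (s : Set E2) :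
    volume (Fmap θ β '' s) = volume s := by
  rw [Fmap_eq_toEuclideanLin]
  rw [Measure.addHaar_image_linearMap]
  have : LinearMap.det (Matrix.toEuclideanLin (Fmat θ β) : _ →ₗ[ℝ] _) = (Fmat θ β).det := by
    rw [Matrix.toEuclideanLin_eq_toLin]
    exact LinearMap.det_toLin _ _
  rw [this, Fmat_det θ hβ]
  simp

noncomputable def entA (p : ℝ × ℝ) : ℝ := p.2 * cos p.1 ^ 2 + (1/p.2) * sin p.1 ^ 2
noncomputable def entB (p : ℝ × ℝ) : ℝ := (p.2 - 1/p.2) * sin p.1 * cos p.1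
noncomputable def entD (p : ℝ × ℝ) : ℝ := p.2 * sin p.1 ^ 2 + (1/p.2) * cos p.1 ^ 2

lemma abs_coord_le (x : E2) (i : Fin 2) : |x i| ≤ ‖x‖ := by
  rw [EuclideanSpace.norm_eq, Fin.sum_univ_two, ← Real.sqrt_sq_eq_abs]
  apply Real.sqrt_le_sqrt
  fin_cases i <;> · simp [Real.norm_eq_abs, sq_abs]; positivity

lemma sqrt_add_le (u v : ℝ) : Real.sqrt (u^2 + v^2) ≤ |u| + |v| := by
  rw [show |u| + |v| = Real.sqrt ((|u| + |v|)^2) from (Real.sqrt_sq (by positivity)).symm]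
  apply Real.sqrt_le_sqrt
  nlinarith [sq_abs u, sq_abs v, mul_nonneg (abs_nonneg u) (abs_nonneg v)]

lemma dist_Fmap_le (p q : ℝ × ℝ) (x : E2) {R : ℝ}
    (hx0 : |x 0| ≤ R) (hx1 : |x 1| ≤ R) :
    dist (Fmap p.1 p.2 x) (Fmap q.1 q.2 x) ≤
      R * (|entA p - entA q| + |entB p - entB q|) +
      R * (|entB p - entB q| + |entD p - entD q|) := by
  rw [EuclideanSpace.dist_eq, Fin.sum_univ_two]
  have e0 : Fmap p.1 p.2 x 0 = entA p * x 0 + entB p * x 1 := rfl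
  have e1 : Fmap p.1 p.2 x 1 = entB p * x 0 + entD p * x 1 := rfl
  have f0 : Fmap q.1 q.2 x 0 = entA q * x 0 + entB q * x 1 := rfl
  have f1 : Fmap q.1 q.2 x 1 = entB q * x 0 + entD q * x 1 := rfl
  rw [e0, e1, f0, f1]
  set u := entA p * x 0 + entB p * x 1 - (entA q * x 0 + entB q * x 1) with hu
  set v := entB p * x 0 + entD p * x 1 - (entB q * x 0 + entD q * x 1) with hv
  have hdu : dist (entA p * x 0 + entB p * x 1) (entA q * x 0 + entB q * x 1) = |u| :=
    Real.dist_eq _ _ ▸ rfl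
  have hdv : dist (entB p * x 0 + entD p * x 1) (entB q * x 0 + entD q * x 1) = |v| :=
    Real.dist_eq _ _ ▸ rfl
  rw [hdu, hdv, sq_abs, sq_abs]
  refine (sqrt_add_le u v).trans ?_
  have hu' : |u| ≤ R * (|entA p - entA q| + |entB p - entB q|) := by
    rw [hu]
    have : entA p * x 0 + entB p * x 1 - (entA q * x 0 + entB q * x 1)
        = (entA p - entA q) * x 0 + (entB p - entB q) * x 1 := by ring
    rw [this]
    calc |(entA p - entA q) * x 0 + (entB p - entB q) * x 1|
        ≤ |(entA p - entA q) * x 0| + |(entB p - entB q) * x 1| := abs_add_le _ _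
      _ = |entA p - entA q| * |x 0| + |entB p - entB q| * |x 1| := by rw [abs_mul, abs_mul]
      _ ≤ |entA p - entA q| * R + |entB p - entB q| * R := by gcongr
      _ = R * (|entA p - entA q| + |entB p - entB q|) := by ring
  have hv' : |v| ≤ R * (|entB p - entB q| + |entD p - entD q|) := by
    rw [hv]
    have : entB p * x 0 + entD p * x 1 - (entB q * x 0 + entD q * x 1)
        = (entB p - entB q) * x 0 + (entD p - entD q) * x 1 := by ring
    rw [this]
    calc |(entB p - entB q) * x 0 + (entD p - entD q) * x 1|
        ≤ |(entB p - entB q) * x 0| + |(entD p - entD q) * x 1| := abs_add_le _ _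
      _ = |entB p - entB q| * |x 0| + |entD p - entD q| * |x 1| := by rw [abs_mul, abs_mul]
      _ ≤ |entB p - entB q| * R + |entD p - entD q| * R := by gcongr
      _ = R * (|entB p - entB q| + |entD p - entD q|) := by ring
  linarith

/-- Continuity of the measure of the `ε`-collar of the image. -/
lemma G_continuousAt (a : Set E2) (ha : IsCompact a) (hane : a.Nonempty)
    {ε : ℝ} (hε : 0 < ε) (p₀ : ℝ × ℝ) (hβ₀ : p₀.2 ≠ 0) :
    ContinuousAt (fun p : ℝ × ℝ => (volume (cthickening ε (Fmap p.1 p.2 '' a))).toReal) p₀ := by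
  -- bound on a
  obtain ⟨R₀, hR₀⟩ := ha.isBounded.subset_closedBall 0
  set R : ℝ := max R₀ 1 with hRdef
  have hR1 : (0:ℝ) < R := lt_of_lt_of_le one_pos (le_max_right _ _)
  have hcoord : ∀ x ∈ a, |x 0| ≤ R ∧ |x 1| ≤ R := by
    intro x hx
    have hn : ‖x‖ ≤ R := by
      have := hR₀ hx
      rw [mem_closedBall, dist_zero_right] at this
      exact this.trans (le_max_left _ _)
    exact ⟨(abs_coord_le x 0).trans hn, (abs_coord_le x 1).trans hn⟩
  set K₀ : Set E2 := Fmap p₀.1 p₀.2 '' a with hK₀def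
  have hK₀ : IsCompact K₀ := ha.image (Fmap_continuous _ _)
  have hK₀ne : K₀.Nonempty := hane.image _
  -- continuity of the entries at p₀
  have hcos : ContinuousAt (fun p : ℝ × ℝ => cos p.1) p₀ :=
    Real.continuous_cos.continuousAt.comp continuousAt_fst
  have hsin : ContinuousAt (fun p : ℝ × ℝ => sin p.1) p₀ :=
    Real.continuous_sin.continuousAt.comp continuousAt_fst
  have hinv : ContinuousAt (fun p : ℝ × ℝ => 1/p.2) p₀ :=
    ContinuousAt.div continuousAt_const continuousAt_snd hβ₀
  have hA : ContinuousAt entA p₀ :=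
    (continuousAt_snd.mul (hcos.pow 2)).add (hinv.mul (hsin.pow 2))
  have hBc : ContinuousAt entB p₀ :=
    ((continuousAt_snd.sub hinv).mul hsin).mul hcos
  have hD : ContinuousAt entD p₀ :=
    (continuousAt_snd.mul (hsin.pow 2)).add (hinv.mul (hcos.pow 2))
  set W : ℝ × ℝ → ℝ := fun p =>
    R * (|entA p - entA p₀| + |entB p - entB p₀|) +
    R * (|entB p - entB p₀| + |entD p - entD p₀|) with hWdef
  have hW : ContinuousAt W p₀ := by
    apply ContinuousAt.add <;> apply ContinuousAt.mul continuousAt_const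
    · exact ((hA.sub continuousAt_const).abs).add ((hBc.sub continuousAt_const).abs)
    · exact ((hBc.sub continuousAt_const).abs).add ((hD.sub continuousAt_const).abs)
  have hW0 : W p₀ = 0 := by simp [hWdef]
  -- main estimate
  rw [ContinuousAt, Metric.tendsto_nhds]
  intro η hη
  obtain ⟨δ, hδ0, hδε, hδ1, hδ2⟩ := cthick_modulus K₀ hK₀ hK₀ne hε (half_pos hη)
  have hWev : ∀ᶠ p in 𝓝 p₀, W p < δ := by
    have : Tendsto W (𝓝 p₀) (𝓝 0) := hW0 ▸ hW.tendsto
    exact this.eventually (Iio_mem_nhds hδ0)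
  filter_upwards [hWev] with p hp
  set Kp : Set E2 := Fmap p.1 p.2 '' a with hKpdef
  have hKp : IsCompact Kp := ha.image (Fmap_continuous _ _)
  have hdd : ∀ x ∈ a, dist (Fmap p.1 p.2 x) (Fmap p₀.1 p₀.2 x) ≤ δ := by
    intro x hx
    exact (dist_Fmap_le p p₀ x (hcoord x hx).1 (hcoord x hx).2).trans hp.le
  have hsub1 : Kp ⊆ cthickening δ K₀ := by
    rintro _ ⟨x, hx, rfl⟩
    exact mem_cthickening_of_dist_le _ (Fmap p₀.1 p₀.2 x) _ _ ⟨x, hx, rfl⟩ (hdd x hx)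
  have hsub2 : K₀ ⊆ cthickening δ Kp := by
    rintro _ ⟨x, hx, rfl⟩
    refine mem_cthickening_of_dist_le _ (Fmap p.1 p.2 x) _ _ ⟨x, hx, rfl⟩ ?_
    rw [dist_comm]; exact hdd x hx
  have hup : cthickening ε Kp ⊆ cthickening (ε + δ) K₀ :=
    (cthickening_subset_of_subset ε hsub1).trans
      (cthickening_cthickening_subset hε.le hδ0.le K₀)
  have hlo : cthickening (ε - δ) K₀ ⊆ cthickening ε Kp := by
    refine (cthickening_subset_of_subset (ε - δ) hsub2).trans ?_
    have := cthickening_cthickening_subset (by linarith : (0:ℝ) ≤ ε - δ) hδ0.le Kp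
    rwa [sub_add_cancel] at this
  have hfin : ∀ (s : Set E2), IsCompact s → ∀ r : ℝ, volume (cthickening r s) ≠ ⊤ :=
    fun s hs r => (hs.cthickening).measure_lt_top.ne
  have h1 : (volume (cthickening ε Kp)).toReal ≤ (volume (cthickening (ε + δ) K₀)).toReal :=
    ENNReal.toReal_mono (hfin K₀ hK₀ _) (measure_mono hup)
  have h2 : (volume (cthickening (ε - δ) K₀)).toReal ≤ (volume (cthickening ε Kp)).toReal :=
    ENNReal.toReal_mono (hfin Kp hKp _) (measure_mono hlo)
  rw [Real.dist_eq, abs_lt]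
  constructor <;> [linarith; linarith]

theorem Pfun_continuousOn (a : Set (EuclideanSpace ℝ (Fin 2))) (ha : IsCompact a)
    (hvol : 0 < volume a) (ε : ℝ) (hε : 0 < ε) :
    ContinuousOn (fun p : ℝ × ℝ => Pfun ε p.1 p.2 a)
      (Set.Icc (-(π/2)) (π/2) ×ˢ Set.Ici 1) := by
  have hane : a.Nonempty := nonempty_of_measure_ne_zero hvol.ne'
  set c : ℝ := (volume a).toReal with hc
  have hcpos : 0 < c := ENNReal.toReal_pos hvol.ne' ha.measure_lt_top.ne
  set G : ℝ × ℝ → ℝ := fun p => (volume (cthickening ε (Fmap p.1 p.2 '' a))).toReal with hGdef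
  have hGc : ∀ p ∈ Set.Icc (-(π/2)) (π/2) ×ˢ Set.Ici (1:ℝ), ContinuousAt G p := by
    rintro p ⟨_, hp2⟩
    have : p.2 ≠ 0 := by
      have : (1:ℝ) ≤ p.2 := hp2
      linarith
    exact G_continuousAt a ha hane hε p this
  apply ContinuousOn.congr (f := fun p : ℝ × ℝ => (G p - c) / c)
  · intro p hp
    exact (((hGc p hp).sub continuousAt_const).div continuousAt_const
      hcpos.ne').continuousWithinAt
  · rintro p ⟨_, hp2⟩
    have hβ : p.2 ≠ 0 := by
      have : (1:ℝ) ≤ p.2 := hp2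
      linarith
    set K : Set E2 := Fmap p.1 p.2 '' a with hK
    have hKc : IsCompact K := ha.image (Fmap_continuous _ _)
    have hvolK : volume K = volume a := Fmap_volume_image p.1 hβ a
    have hsub : K ⊆ cthickening ε K := self_subset_cthickening K
    have hdiff : volume (cthickening ε K \ K) = volume (cthickening ε K) - volume K :=
      measure_diff hsub hKc.isClosed.measurableSet.nullMeasurableSet hKc.measure_lt_top.ne
    have hfin : volume (cthickening ε K) ≠ ⊤ := (hKc.cthickening).measure_lt_top.ne
    show Pfun ε p.1 p.2 a = (G p - c) / c
    rw [Pfun, hdiff, ENNReal.toReal_sub_of_le (measure_mono hsub) hfin, hvolK]
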